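/- arXiv:1309.7756 — 3 statements merged into one kernel-verified Lean document; each statement's English description precedes it below -/
import Mathlib

section
/- Eigenfunction of the linearized operator with eigenvalue 1: For every d ∈ ℝ^N with |d| < 1, the function f(y) = (1−|d|²)^{p/(p−1)} (1+d·y)^{−(p+1)/(p−1)} satisfies, for every y ∈ B, the identity 𝓛f(y) + ψ(d,y) f(y) − ((p+3)/(p−1)) f(y) − 2 y·∇f(y) = f(y). (Equivalently, the pair F₀(d) = (f, f) is an eigenfunction of the linearized operator L_d(q₁,q₂) = (q₂, 𝓛q₁ + ψ(d,·)q₁ − ((p+3)/(p−1))q₂ − 2y·∇q₂) with eigenvalue λ = 1.) -/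
set_option maxHeartbeats 1000000


open MeasureTheory Metric
open scoped RealInnerProductSpace

noncomputable section

/-- The degenerate elliptic operator 𝓛 in expanded form:
`𝓛w(y) = Δw(y) − Σ_{i,j} y_i y_j ∂²_{ij}w(y) − (2(p+1)/(p−1)) y·∇w(y)`. -/
def calL (N : ℕ) (p : ℝ) (w : EuclideanSpace ℝ (Fin N) → ℝ)
    (y : EuclideanSpace ℝ (Fin N)) : ℝ :=
  (∑ i : Fin N, fderiv ℝ (fun z => fderiv ℝ w z (EuclideanSpace.single i 1)) y
      (EuclideanSpace.single i 1))
    - fderiv ℝ (fun z => fderiv ℝ w z y) y y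
    - (2 * (p + 1) / (p - 1)) * fderiv ℝ w y y

/-- The potential `ψ(d,y)`. -/
def psiFun (N : ℕ) (p : ℝ) (d y : EuclideanSpace ℝ (Fin N)) : ℝ :=
  2 * (p + 1) / (p - 1) ^ 2 * (p * (1 - ‖d‖ ^ 2) / (1 + ⟪d, y⟫) ^ 2 - 1)

/-- Eigenfunction of the linearized operator with eigenvalue 1. -/
theorem stmt3 (N : ℕ) (p : ℝ) (hN : 1 ≤ N) (hp1 : 1 < p)
    (hpc : 2 ≤ N → p < 1 + 4 / ((N : ℝ) - 1))
    (d : EuclideanSpace ℝ (Fin N)) (hd : ‖d‖ < 1)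
    (f : EuclideanSpace ℝ (Fin N) → ℝ)
    (hf : f = fun y => (1 - ‖d‖ ^ 2) ^ (p / (p - 1)) *
      (1 + ⟪d, y⟫) ^ (-((p + 1) / (p - 1)))) :
    ∀ y ∈ ball (0 : EuclideanSpace ℝ (Fin N)) 1,
      calL N p f y + psiFun N p d y * f y - (p + 3) / (p - 1) * f y
          - 2 * fderiv ℝ f y y
        = f y := by
  intro y hy
  have hy' : ‖y‖ < 1 := by simpa using hy
  have hp : (p : ℝ) - 1 ≠ 0 := by linarith
  set α : ℝ := -((p + 1) / (p - 1)) with hα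
  set C : ℝ := (1 - ‖d‖ ^ 2) ^ (p / (p - 1)) with hC
  -- positivity of 1 + ⟪d,z⟫ on the unit ball
  have hpos : ∀ z : EuclideanSpace ℝ (Fin N), ‖z‖ < 1 → 0 < 1 + ⟪d, z⟫ := by
    intro z hz
    have h1 : |⟪d, z⟫| ≤ ‖d‖ * ‖z‖ := abs_real_inner_le_norm d z
    have h2 : ‖d‖ * ‖z‖ < 1 := by nlinarith [norm_nonneg d, norm_nonneg z]
    have h3 := abs_lt.mp (lt_of_le_of_lt h1 h2)
    linarith [h3.1]
  have hGy : 0 < 1 + ⟪d, y⟫ := hpos y hy'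
  -- first derivative
  have hder : ∀ z : EuclideanSpace ℝ (Fin N), 0 < 1 + ⟪d, z⟫ →
      HasFDerivAt f ((C * (α * (1 + ⟪d, z⟫) ^ (α - 1))) • (innerSL ℝ d)) z := by
    intro z hz
    have h1 : HasFDerivAt (fun w : EuclideanSpace ℝ (Fin N) => 1 + ⟪d, w⟫)
        (innerSL ℝ d) z := by
      simpa using ((innerSL ℝ d).hasFDerivAt (x := z)).const_add 1
    have h2 := (h1.rpow_const (p := α) (Or.inl hz.ne')).const_mul C
    rw [hf]
    simpa [smul_smul, mul_assoc] using h2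
  have hfd : ∀ z : EuclideanSpace ℝ (Fin N), 0 < 1 + ⟪d, z⟫ →
      ∀ v, fderiv ℝ f z v = C * (α * (1 + ⟪d, z⟫) ^ (α - 1)) * ⟪d, v⟫ := by
    intro z hz v
    rw [(hder z hz).fderiv]
    simp
  -- second derivative
  have hU : IsOpen {z : EuclideanSpace ℝ (Fin N) | 0 < 1 + ⟪d, z⟫} := by
    have : Continuous fun z : EuclideanSpace ℝ (Fin N) => 1 + ⟪d, z⟫ :=
      continuous_const.add (continuous_const.inner continuous_id)
    exact isOpen_lt continuous_const this
  have key2 : ∀ v w : EuclideanSpace ℝ (Fin N),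
      fderiv ℝ (fun z => fderiv ℝ f z v) y w
        = C * α * (α - 1) * (1 + ⟪d, y⟫) ^ (α - 2) * ⟪d, v⟫ * ⟪d, w⟫ := by
    intro v w
    have hev : (fun z => fderiv ℝ f z v) =ᶠ[nhds y]
        (fun z => (C * α * ⟪d, v⟫) * (1 + ⟪d, z⟫) ^ (α - 1)) := by
      filter_upwards [hU.mem_nhds hGy] with z hz
      rw [hfd z hz v]; ring
    rw [hev.fderiv_eq]
    have h1 : HasFDerivAt (fun w : EuclideanSpace ℝ (Fin N) => 1 + ⟪d, w⟫)
        (innerSL ℝ d) y := by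
      simpa using ((innerSL ℝ d).hasFDerivAt (x := y)).const_add 1
    have h2 := (h1.rpow_const (p := (α - 1)) (Or.inl hGy.ne')).const_mul
      (C * α * ⟪d, v⟫)
    rw [show α - 1 - 1 = α - 2 from by ring] at h2
    rw [h2.fderiv]
    simp only [ContinuousLinearMap.smul_apply, smul_eq_mul, innerSL_apply_apply]
    ring
  -- the sum over coordinates
  have hsum : ∑ i : Fin N, ⟪d, EuclideanSpace.single i (1:ℝ)⟫ *
      ⟪d, EuclideanSpace.single i (1:ℝ)⟫ = ‖d‖ ^ 2 := by
    have : ∀ i : Fin N, ⟪d, EuclideanSpace.single i (1:ℝ)⟫ = d i := by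
      intro i; simp [EuclideanSpace.inner_single_right]
    simp_rw [this]
    rw [← real_inner_self_eq_norm_sq]
    simp [PiLp.inner_apply, -inner_self_eq_norm_sq_to_K, -real_inner_self_eq_norm_sq]
  unfold calL psiFun
  simp only [key2, hfd y hGy]
  have hsum2 : (∑ i : Fin N, C * α * (α - 1) * (1 + ⟪d, y⟫) ^ (α - 2) *
        ⟪d, EuclideanSpace.single i (1:ℝ)⟫ * ⟪d, EuclideanSpace.single i (1:ℝ)⟫)
      = C * α * (α - 1) * (1 + ⟪d, y⟫) ^ (α - 2) * ‖d‖ ^ 2 := by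
    rw [← hsum, Finset.mul_sum]
    exact Finset.sum_congr rfl fun i _ => by ring
  rw [hsum2, hf]
  beta_reduce
  have hG := hGy
  set s : ℝ := ⟪d, y⟫ with hs
  have hGne : (1 : ℝ) + s ≠ 0 := hG.ne'
  have hA : (1 + s) ^ (α - 1) = (1 + s) ^ α / (1 + s) := by
    rw [Real.rpow_sub hG, Real.rpow_one]
  have hB : (1 + s) ^ (α - 2) = (1 + s) ^ α / (1 + s) ^ 2 := by
    rw [Real.rpow_sub hG, show ((2:ℝ)) = ((2:ℕ):ℝ) by norm_num, Real.rpow_natCast]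
  rw [hA, hB]
  set A : ℝ := (1 + s) ^ α with hAdef
  rw [hα]
  field_simp
  ring
end
end

section
/- Kernel elements of the linearized operator (eigenvalue 0): Let d ∈ ℝ^N with |d| < 1. (a) If d ≠ 0 and e = d/|d|, then the function g(y) = (1−|d|²)^{1/(p−1)} (y·e + |d|) (1+d·y)^{−(p+1)/(p−1)} satisfies 𝓛g(y) + ψ(d,y) g(y) = 0 for every y ∈ B. (b) If e ∈ ℝ^N is any unit vector with e·d = 0, then the function g(y) = (1−|d|²)^{(p+1)/(2(p−1))} (y·e) (1+d·y)^{−(p+1)/(p−1)} satisfies 𝓛g(y) + ψ(d,y) g(y) = 0 for every y ∈ B. (Equivalently, the pairs (g, 0) are eigenfunctions of the linearized operator L_d(q₁,q₂) = (q₂, 𝓛q₁ + ψ(d,·)q₁ − ((p+3)/(p−1))q₂ − 2y·∇q₂) with eigenvalue λ = 0.) -/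
open MeasureTheory Metric
open scoped RealInnerProductSpace

noncomputable section

namespace Stmt4Aux

variable {N : ℕ}
local notation "E" => EuclideanSpace ℝ (Fin N)

lemma core_has (C γ c : ℝ) (d v : E) (z : E) (hz : 0 < 1 + ⟪d, z⟫) :
    HasFDerivAt (fun w : E => C * (⟪w, v⟫ + c) * (1 + ⟪d, w⟫) ^ γ)
      ((C * (1 + ⟪d, z⟫) ^ γ) • (innerSL ℝ v) +
        (C * (⟪z, v⟫ + c) * (γ * (1 + ⟪d, z⟫) ^ (γ - 1))) • (innerSL ℝ d)) z := by
  have hs : HasFDerivAt (fun w : E => 1 + ⟪d, w⟫) (innerSL ℝ d) z := by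
    simpa using ((innerSL ℝ d).hasFDerivAt (x := z)).const_add 1
  have hpow : HasFDerivAt (fun w : E => (1 + ⟪d, w⟫) ^ γ)
      ((γ * (1 + ⟪d, z⟫) ^ (γ - 1)) • (innerSL ℝ d)) z := by
    have h := (Real.hasDerivAt_rpow_const (x := 1 + ⟪d, z⟫) (p := γ) (Or.inl hz.ne')).comp_hasFDerivAt z hs
    exact h
  have hu : HasFDerivAt (fun w : E => C * (⟪w, v⟫ + c)) (C • innerSL ℝ v) z := by
    have h1 : HasFDerivAt (fun w : E => ⟪w, v⟫ + c) (innerSL ℝ v) z := by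
      have he : (fun w : E => ⟪w, v⟫ + c) = fun w : E => (innerSL ℝ v) w + c := by
        funext w; rw [real_inner_comm]; simp
      rw [he]; exact ((innerSL ℝ v).hasFDerivAt).add_const c
    simpa using h1.const_mul C
  have hm := hu.fun_mul hpow
  refine hm.congr_fderiv ?_
  ext k
  simp
  ring

lemma fderiv_core (C γ c : ℝ) (d v : E) (z : E) (hz : 0 < 1 + ⟪d, z⟫) (h : E) :
    fderiv ℝ (fun w : E => C * (⟪w, v⟫ + c) * (1 + ⟪d, w⟫) ^ γ) z h
      = C * (1 + ⟪d, z⟫) ^ γ * ⟪v, h⟫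
        + C * (⟪z, v⟫ + c) * (γ * (1 + ⟪d, z⟫) ^ (γ - 1)) * ⟪d, h⟫ := by
  rw [(core_has C γ c d v z hz).fderiv]
  simp

lemma fderiv2_core (C γ c : ℝ) (d v : E) (y : E) (hy : 0 < 1 + ⟪d, y⟫) (h k : E) :
    fderiv ℝ (fun z : E =>
        fderiv ℝ (fun w : E => C * (⟪w, v⟫ + c) * (1 + ⟪d, w⟫) ^ γ) z h) y k
      = C * ⟪v, h⟫ * (γ * (1 + ⟪d, y⟫) ^ (γ - 1)) * ⟪d, k⟫
        + C * γ * ⟪d, h⟫ * ((1 + ⟪d, y⟫) ^ (γ - 1) * ⟪v, k⟫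
            + (⟪y, v⟫ + c) * ((γ - 1) * (1 + ⟪d, y⟫) ^ (γ - 2)) * ⟪d, k⟫) := by
  have hU : IsOpen {z : E | 0 < 1 + ⟪d, z⟫} :=
    isOpen_lt continuous_const (continuous_const.add (continuous_const.inner continuous_id))
  have hev : (fun z : E =>
        fderiv ℝ (fun w : E => C * (⟪w, v⟫ + c) * (1 + ⟪d, w⟫) ^ γ) z h)
      =ᶠ[nhds y] (fun z : E =>
        (C * ⟪v, h⟫) * (⟪z, (0 : E)⟫ + 1) * (1 + ⟪d, z⟫) ^ γ
          + (C * γ * ⟪d, h⟫) * (⟪z, v⟫ + c) * (1 + ⟪d, z⟫) ^ (γ - 1)) := by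
    filter_upwards [hU.mem_nhds hy] with z hz
    rw [fderiv_core C γ c d v z hz h]
    simp
    ring
  rw [hev.fderiv_eq]
  have h1 := core_has (C * ⟪v, h⟫) γ 1 d (0 : E) y hy
  have h2 := core_has (C * γ * ⟪d, h⟫) (γ - 1) c d v y hy
  rw [(h1.fun_add h2).fderiv]
  rw [show γ - 1 - 1 = γ - 2 by ring]
  simp
  ring

lemma inner_single (x : E) (i : Fin N) : ⟪x, EuclideanSpace.single i (1 : ℝ)⟫ = x i := by
  simp [PiLp.inner_apply, EuclideanSpace.single_apply]

set_option maxHeartbeats 1600000 in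
theorem key (p : ℝ) (hp1 : 1 < p) (d v : E) (hd : ‖d‖ < 1) (C : ℝ)
    (y : E) (hy : y ∈ ball (0 : E) 1) :
    calL N p (fun z => C * (⟪z, v⟫ + ⟪d, v⟫) * (1 + ⟪d, z⟫) ^ (-((p + 1) / (p - 1)))) y
      + psiFun N p d y
        * (C * (⟪y, v⟫ + ⟪d, v⟫) * (1 + ⟪d, y⟫) ^ (-((p + 1) / (p - 1)))) = 0 := by
  have hy1 : ‖y‖ < 1 := by simpa using hy
  have hdy : |⟪d, y⟫| ≤ ‖d‖ * ‖y‖ := abs_real_inner_le_norm d y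
  have hs : 0 < 1 + ⟪d, y⟫ := by
    have h1 : ‖d‖ * ‖y‖ < 1 := by nlinarith [norm_nonneg d, norm_nonneg y]
    have h2 := abs_le.mp hdy
    linarith [h2.1]
  set γ : ℝ := -((p + 1) / (p - 1)) with hγ
  have hp0 : p - 1 ≠ 0 := sub_ne_zero_of_ne hp1.ne'
  have hsne : (1 + ⟪d, y⟫) ≠ 0 := hs.ne'
  have e1 : (1 + ⟪d, y⟫) ^ (γ - 1) = (1 + ⟪d, y⟫) ^ γ / (1 + ⟪d, y⟫) := by
    rw [Real.rpow_sub hs, Real.rpow_one]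
  have e2 : (1 + ⟪d, y⟫) ^ (γ - 2) = (1 + ⟪d, y⟫) ^ γ / (1 + ⟪d, y⟫) ^ 2 := by
    rw [Real.rpow_sub hs, show ((2 : ℝ) = ((2 : ℕ) : ℝ)) by norm_num, Real.rpow_natCast]
  rw [calL, psiFun]
  rw [fderiv_core C γ (⟪d, v⟫) d v y hs y]
  rw [fderiv2_core C γ (⟪d, v⟫) d v y hs y y]
  have hsum : (∑ i : Fin N, fderiv ℝ (fun z =>
        fderiv ℝ (fun w : E => C * (⟪w, v⟫ + ⟪d, v⟫) * (1 + ⟪d, w⟫) ^ γ) z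
          (EuclideanSpace.single i 1)) y (EuclideanSpace.single i 1))
      = (2 * C * γ * (1 + ⟪d, y⟫) ^ (γ - 1)) * ⟪v, d⟫
        + (C * γ * (⟪y, v⟫ + ⟪d, v⟫) * ((γ - 1) * (1 + ⟪d, y⟫) ^ (γ - 2))) * ⟪d, d⟫ := by
    have step : ∀ i : Fin N, fderiv ℝ (fun z =>
        fderiv ℝ (fun w : E => C * (⟪w, v⟫ + ⟪d, v⟫) * (1 + ⟪d, w⟫) ^ γ) z
          (EuclideanSpace.single i 1)) y (EuclideanSpace.single i 1)
        = (v i * d i) * (2 * C * γ * (1 + ⟪d, y⟫) ^ (γ - 1))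
          + (d i * d i) * (C * γ * (⟪y, v⟫ + ⟪d, v⟫) * ((γ - 1) * (1 + ⟪d, y⟫) ^ (γ - 2))) := by
      intro i
      rw [fderiv2_core C γ (⟪d, v⟫) d v y hs _ _, inner_single, inner_single]
      ring
    rw [Finset.sum_congr rfl fun i _ => step i, Finset.sum_add_distrib,
      ← Finset.sum_mul, ← Finset.sum_mul]
    have hvd : (∑ i : Fin N, v i * d i) = ⟪v, d⟫ := by
      simp [PiLp.inner_apply, mul_comm]
    have hdd : (∑ i : Fin N, d i * d i) = ⟪d, d⟫ := by
      simp only [PiLp.inner_apply, RCLike.inner_apply, conj_trivial]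
    rw [hvd, hdd]
    ring
  rw [hsum]
  rw [real_inner_self_eq_norm_sq d, real_inner_comm v d, real_inner_comm v y]
  rw [e1, e2]
  revert hsne
  generalize hA : (1 + ⟪d, y⟫) ^ γ = A
  generalize ht : ⟪d, y⟫ = t
  generalize hw : ⟪y, v⟫ = w
  generalize hk : ⟪d, v⟫ = k0
  intro hsne
  rw [hγ]
  field_simp
  ring

end Stmt4Aux

/-- Kernel elements of the linearized operator (eigenvalue 0). -/
theorem stmt4 (N : ℕ) (p : ℝ) (hN : 1 ≤ N) (hp1 : 1 < p)
    (hpc : 2 ≤ N → p < 1 + 4 / ((N : ℝ) - 1))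
    (d : EuclideanSpace ℝ (Fin N)) (hd : ‖d‖ < 1) :
    -- (a) the radial direction
    (d ≠ 0 →
      ∀ g : EuclideanSpace ℝ (Fin N) → ℝ,
        g = (fun y => (1 - ‖d‖ ^ 2) ^ (1 / (p - 1)) * (⟪y, ‖d‖⁻¹ • d⟫ + ‖d‖) *
          (1 + ⟪d, y⟫) ^ (-((p + 1) / (p - 1)))) →
        ∀ y ∈ ball (0 : EuclideanSpace ℝ (Fin N)) 1,
          calL N p g y + psiFun N p d y * g y = 0) ∧
    -- (b) the orthogonal directions
    (∀ e : EuclideanSpace ℝ (Fin N), ‖e‖ = 1 → ⟪e, d⟫ = 0 →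
      ∀ g : EuclideanSpace ℝ (Fin N) → ℝ,
        g = (fun y => (1 - ‖d‖ ^ 2) ^ ((p + 1) / (2 * (p - 1))) * ⟪y, e⟫ *
          (1 + ⟪d, y⟫) ^ (-((p + 1) / (p - 1)))) →
        ∀ y ∈ ball (0 : EuclideanSpace ℝ (Fin N)) 1,
          calL N p g y + psiFun N p d y * g y = 0) := by
  constructor
  · intro hdne g hg y hy
    have hdv : ⟪d, ‖d‖⁻¹ • d⟫ = ‖d‖ := by
      rw [real_inner_smul_right, real_inner_self_eq_norm_sq]
      field_simp [norm_ne_zero_iff.mpr hdne]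
    have hgeq : g = fun z => (1 - ‖d‖ ^ 2) ^ (1 / (p - 1)) *
        (⟪z, ‖d‖⁻¹ • d⟫ + ⟪d, ‖d‖⁻¹ • d⟫) * (1 + ⟪d, z⟫) ^ (-((p + 1) / (p - 1))) := by
      rw [hg]; funext z; rw [hdv]
    rw [hgeq]
    exact Stmt4Aux.key p hp1 d (‖d‖⁻¹ • d) hd _ y hy
  · intro e he hed g hg y hy
    have hde : ⟪d, e⟫ = 0 := by rw [real_inner_comm]; exact hed
    have hgeq : g = fun z => (1 - ‖d‖ ^ 2) ^ ((p + 1) / (2 * (p - 1))) *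
        (⟪z, e⟫ + ⟪d, e⟫) * (1 + ⟪d, z⟫) ^ (-((p + 1) / (p - 1))) := by
      rw [hg]; funext z; rw [hde, add_zero]
    rw [hgeq]
    exact Stmt4Aux.key p hp1 d e hd _ y hy
end
end

section
/- Hardy inequality on the unit ball with weight (1−|y|²)^{−2}: Let N ≥ 2. For every C¹ function g : ℝ^N → ℝ with compact support contained in the open unit ball B, one has ∫_B g(y)²/(1−|y|²)² dy ≤ ∫_B |∇g(y)|² dy. -/
open MeasureTheory Metric

noncomputable section

private theorem hardy_arith_key (a b n r ρ Nr : ℝ) (hρ : ρ = 1 - r^2) (hr : 0 ≤ r) (hr1 : r < 1)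
    (hb : |b| ≤ n * r) (hN : 2 ≤ Nr) :
    a^2/ρ^2 ≤ (2*a*b*ρ⁻¹ + (a*a)*(2*(r^2))*(ρ^2)⁻¹) + Nr*(a*a*ρ⁻¹) + n^2 := by
  have hρpos : 0 < ρ := by nlinarith
  obtain ⟨hb1, hb2⟩ := abs_le.1 hb
  have hne : ρ ≠ 0 := ne_of_gt hρpos
  have hNρ : 2*(a*a*ρ) ≤ Nr*(a*a*ρ) :=
    mul_le_mul_of_nonneg_right hN (by nlinarith [mul_self_nonneg a])
  have key : a^2 ≤ 2*a*b*ρ + (a*a)*(2*(r^2)) + Nr*(a*a*ρ) + n^2*ρ^2 := by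
    rcases le_or_gt 0 a with ha | ha
    · have h1 : 2*a*(-(n*r))*ρ ≤ 2*a*b*ρ := by
        apply mul_le_mul_of_nonneg_right _ hρpos.le
        apply mul_le_mul_of_nonneg_left hb1 (by linarith)
      nlinarith [sq_nonneg (a*r - n*ρ), mul_nonneg (mul_nonneg ha ha) hρpos.le]
    · have h1 : 2*a*(n*r)*ρ ≤ 2*a*b*ρ := by
        apply mul_le_mul_of_nonneg_right _ hρpos.le
        have := mul_le_mul_of_nonpos_left hb2 (by linarith : 2*a ≤ 0)
        linarith
      nlinarith [sq_nonneg (a*r + n*ρ), mul_nonneg (mul_self_nonneg a) hρpos.le]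
  have expand : (2*a*b*ρ⁻¹ + (a*a)*(2*(r^2))*(ρ^2)⁻¹) + Nr*(a*a*ρ⁻¹) + n^2
      = (2*a*b*ρ + (a*a)*(2*(r^2)) + Nr*(a*a*ρ) + n^2*ρ^2)/ρ^2 := by
    field_simp
  rw [expand]
  gcongr

private theorem hardy_key_ibp {N : ℕ} (u : EuclideanSpace ℝ (Fin N) → ℝ)
    (hu : ContDiff ℝ 1 u) (hcs : HasCompactSupport u) (v : EuclideanSpace ℝ (Fin N)) :
    ∫ x, fderiv ℝ u x v = 0 := by
  have hcont : Continuous fun x => fderiv ℝ u x v :=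
    (hu.continuous_fderiv one_ne_zero).clm_apply continuous_const
  have hcsf : HasCompactSupport fun x => fderiv ℝ u x v :=
    (hcs.fderiv ℝ).comp_left (g := fun L : _ →L[ℝ] ℝ => L v) rfl
  have h := integral_mul_fderiv_eq_neg_fderiv_mul_of_integrable
    (μ := (volume : Measure (EuclideanSpace ℝ (Fin N))))
    (f := fun _ => (1:ℝ)) (g := u) (v := v)
    (by simp [fderiv_const])
    (by simpa using hcont.integrable_of_hasCompactSupport hcsf)
    (by simpa using hu.continuous.integrable_of_hasCompactSupport hcs)
    (fun x _ => differentiableAt_const _) (fun x _ => hu.differentiable one_ne_zero x)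
  simpa [fderiv_const] using h

set_option maxHeartbeats 1000000 in
/-- Hardy inequality on the unit ball with weight `(1−|y|²)^{−2}`. -/
theorem stmt13 (N : ℕ) (hN : 2 ≤ N)
    (g : EuclideanSpace ℝ (Fin N) → ℝ)
    (hg : ContDiff ℝ 1 g)
    (hsupp : HasCompactSupport g)
    (hsub : tsupport g ⊆ ball (0 : EuclideanSpace ℝ (Fin N)) 1) :
    (∫ y in ball (0 : EuclideanSpace ℝ (Fin N)) 1, g y ^ 2 / (1 - ‖y‖ ^ 2) ^ 2)
      ≤ ∫ y in ball (0 : EuclideanSpace ℝ (Fin N)) 1, ‖gradient g y‖ ^ 2 := by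
  classical
  set ρ : EuclideanSpace ℝ (Fin N) → ℝ := fun y => 1 - ‖y‖ ^ 2 with hρdef
  set φ : EuclideanSpace ℝ (Fin N) → ℝ := fun y => (g y * g y) * (ρ y)⁻¹ with hφdef
  -- basic facts
  have hρpos : ∀ x : EuclideanSpace ℝ (Fin N),
      x ∈ ball (0:EuclideanSpace ℝ (Fin N)) 1 → 0 < ρ x := by
    intro x hx
    simp only [mem_ball, dist_zero_right] at hx
    have : ‖x‖ ^ 2 < 1 := by nlinarith [norm_nonneg x]
    simp only [hρdef]; linarith
  have hρC : ContDiff ℝ 1 ρ := contDiff_const.sub (contDiff_norm_sq ℝ)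
  have hcases : ∀ x : EuclideanSpace ℝ (Fin N),
      x ∈ ball (0:EuclideanSpace ℝ (Fin N)) 1 ∨ ∀ᶠ y in nhds x, g y = 0 := by
    intro x
    by_cases hx : x ∈ tsupport g
    · exact Or.inl (hsub hx)
    · exact Or.inr (((isOpen_compl_iff.2 (isClosed_tsupport g)).eventually_mem hx).mono
        fun y hy => image_eq_zero_of_notMem_tsupport hy)
  have hφ0 : ∀ x, g x = 0 → φ x = 0 := fun x hx => by simp [hφdef, hx]
  have hφC : ContDiff ℝ 1 φ := by
    rw [contDiff_iff_contDiffAt]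
    intro x
    rcases hcases x with hx | hx
    · exact ((hg.contDiffAt.mul hg.contDiffAt).mul
        (hρC.contDiffAt.inv (ne_of_gt (hρpos x hx))))
    · have : φ =ᶠ[nhds x] fun _ => 0 := hx.mono fun y hy => by simp [hφdef, hy]
      exact (contDiffAt_const (c := (0:ℝ))).congr_of_eventuallyEq this
  -- the derivative of φ on the ball
  have hφval : ∀ x ∈ ball (0:EuclideanSpace ℝ (Fin N)) 1, ∀ v,
      fderiv ℝ φ x v = 2 * g x * (fderiv ℝ g x v) * (ρ x)⁻¹
        + (g x * g x) * (2 * (inner ℝ x v : ℝ)) * ((ρ x)^2)⁻¹ := by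
    intro x hx v
    have hne : ρ x ≠ 0 := ne_of_gt (hρpos x hx)
    have hd : HasFDerivAt g (fderiv ℝ g x) x := (hg.differentiable one_ne_zero x).hasFDerivAt
    have h1 : HasFDerivAt (fun y => g y * g y) (g x • fderiv ℝ g x + g x • fderiv ℝ g x) x :=
      hd.mul hd
    have h2 : HasFDerivAt ρ (-(2 • (innerSL ℝ x))) x := by
      rw [hρdef]
      have h := (hasFDerivAt_const (1:ℝ) x).sub (hasStrictFDerivAt_norm_sq x).hasFDerivAt
      simp only [zero_sub] at h
      exact h
    have h3 : HasFDerivAt (fun y => (ρ y)⁻¹)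
        ((-ContinuousLinearMap.mulLeftRight ℝ ℝ (ρ x)⁻¹ (ρ x)⁻¹).comp
          (-(2 • (innerSL ℝ x)))) x :=
      (hasFDerivAt_inv' hne).comp x h2
    have h4 := h1.mul h3
    have h5 : fderiv ℝ φ x = ((g x * g x) •
        ((-ContinuousLinearMap.mulLeftRight ℝ ℝ (ρ x)⁻¹ (ρ x)⁻¹).comp (-(2 • (innerSL ℝ x))))
        + (ρ x)⁻¹ • (g x • fderiv ℝ g x + g x • fderiv ℝ g x)) := by
      rw [hφdef]; exact h4.fderiv
    rw [h5]
    simp only [ContinuousLinearMap.add_apply, ContinuousLinearMap.smul_apply,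
      ContinuousLinearMap.comp_apply, ContinuousLinearMap.neg_apply,
      ContinuousLinearMap.mulLeftRight_apply, innerSL_apply_apply, smul_eq_mul]
    field_simp
    ring_nf
  -- the vector field coordinates and the divergence
  set u : Fin N → EuclideanSpace ℝ (Fin N) → ℝ := fun i y => φ y * y i with hudef
  have huC : ∀ i, ContDiff ℝ 1 (u i) := fun i =>
    hφC.mul (EuclideanSpace.proj (𝕜 := ℝ) i).contDiff
  have hucs : ∀ i, HasCompactSupport (u i) := fun i =>
    HasCompactSupport.intro hsupp (fun x hx => by
      simp [hudef, hφ0 x (image_eq_zero_of_notMem_tsupport hx)])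
  set Φ : EuclideanSpace ℝ (Fin N) → ℝ :=
    fun x => ∑ i, fderiv ℝ (u i) x (EuclideanSpace.single i 1) with hΦdef
  have hint : ∀ i, Integrable (fun x => fderiv ℝ (u i) x (EuclideanSpace.single i 1)) volume :=
    fun i => (((huC i).continuous_fderiv one_ne_zero).clm_apply
        continuous_const).integrable_of_hasCompactSupport
      (((hucs i).fderiv ℝ).comp_left (g := fun L : _ →L[ℝ] ℝ => L _) rfl)
  have hΦint : Integrable Φ volume := by
    rw [hΦdef]
    exact integrable_finset_sum _ fun i _ => hint i
  have hΦ0 : ∫ x, Φ x = 0 := by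
    rw [hΦdef, integral_finset_sum _ fun i _ => hint i]
    simp [hardy_key_ibp (u _) (huC _) (hucs _)]
  -- the value of the divergence
  have hΦval : ∀ x : EuclideanSpace ℝ (Fin N), Φ x = fderiv ℝ φ x x + N * φ x := by
    intro x
    have hx : ∀ i : Fin N, fderiv ℝ (u i) x (EuclideanSpace.single i 1)
        = φ x + x i * fderiv ℝ φ x (EuclideanSpace.single i 1) := by
      intro i
      have hre : u i = fun y => φ y * (EuclideanSpace.proj (𝕜 := ℝ) i) y := rfl
      rw [hre, fderiv_fun_mul (hφC.differentiable one_ne_zero x)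
          ((EuclideanSpace.proj (𝕜 := ℝ) i).differentiable x)]
      rw [ContinuousLinearMap.add_apply, ContinuousLinearMap.smul_apply,
        ContinuousLinearMap.smul_apply, ContinuousLinearMap.fderiv]
      simp [EuclideanSpace.single_apply, mul_comm]
    have hsum : ∑ i : Fin N, (x i) • (EuclideanSpace.single i (1:ℝ)) = x := by
      have := (EuclideanSpace.basisFun (Fin N) ℝ).sum_repr x
      simpa [EuclideanSpace.basisFun_apply, EuclideanSpace.basisFun_repr] using this
    have hlin : ∑ i : Fin N, x i * fderiv ℝ φ x (EuclideanSpace.single i 1)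
        = fderiv ℝ φ x x := by
      calc ∑ i : Fin N, x i * fderiv ℝ φ x (EuclideanSpace.single i 1)
          = ∑ i : Fin N, fderiv ℝ φ x ((x i) • EuclideanSpace.single i 1) := by simp
        _ = fderiv ℝ φ x (∑ i : Fin N, (x i) • EuclideanSpace.single i 1) :=
            (map_sum (fderiv ℝ φ x) _ _).symm
        _ = fderiv ℝ φ x x := by rw [hsum]
    rw [hΦdef]
    simp only [hx]
    rw [Finset.sum_add_distrib, hlin]
    simp [add_comm]
  -- gradient norm equals operator norm of the derivative
  have hgradnorm : ∀ x : EuclideanSpace ℝ (Fin N), ‖gradient g x‖ = ‖fderiv ℝ g x‖ := by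
    intro x
    rw [gradient]
    exact LinearIsometryEquiv.norm_map _ _
  -- pointwise inequality on the ball
  have hpt : ∀ x ∈ ball (0:EuclideanSpace ℝ (Fin N)) 1,
      g x ^ 2 / (1 - ‖x‖ ^ 2) ^ 2 ≤ Φ x + ‖gradient g x‖ ^ 2 := by
    intro x hx
    have hx1 : ‖x‖ < 1 := by simpa [mem_ball, dist_zero_right] using hx
    have hb : |fderiv ℝ g x x| ≤ ‖gradient g x‖ * ‖x‖ := by
      rw [hgradnorm x]
      simpa [Real.norm_eq_abs] using (fderiv ℝ g x).le_opNorm x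
    have hNcast : (2:ℝ) ≤ (N:ℝ) := by exact_mod_cast hN
    have harith := hardy_arith_key (g x) (fderiv ℝ g x x) (‖gradient g x‖) ‖x‖ (ρ x) (N:ℝ)
      rfl (norm_nonneg x) hx1 hb hNcast
    calc g x ^ 2 / (1 - ‖x‖ ^ 2) ^ 2 = g x ^ 2 / (ρ x) ^ 2 := rfl
      _ ≤ (2*(g x)*(fderiv ℝ g x x)*(ρ x)⁻¹ + ((g x)*(g x))*(2*(‖x‖^2))*((ρ x)^2)⁻¹)
          + (N:ℝ)*((g x)*(g x)*(ρ x)⁻¹) + ‖gradient g x‖^2 := harith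
      _ = Φ x + ‖gradient g x‖ ^ 2 := by
          rw [hΦval x, hφval x hx x, real_inner_self_eq_norm_sq]
  -- integrability of the left-hand side integrand
  have hWcont : Continuous fun y : EuclideanSpace ℝ (Fin N) => g y ^ 2 / (1 - ‖y‖ ^ 2) ^ 2 := by
    rw [continuous_iff_continuousAt]
    intro x
    rcases hcases x with hx | hx
    · exact ContinuousAt.div ((hg.continuous.pow 2).continuousAt)
        (((continuous_const.sub (contDiff_norm_sq (𝕜 := ℝ) (n := 1)).continuous).pow
          2).continuousAt)
        (pow_ne_zero 2 (ne_of_gt (hρpos x hx)))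
    · have : (fun y : EuclideanSpace ℝ (Fin N) => g y ^ 2 / (1 - ‖y‖ ^ 2) ^ 2)
          =ᶠ[nhds x] fun _ => 0 := hx.mono fun y hy => by simp [hy]
      exact this.continuousAt
  have hWcs : HasCompactSupport fun y : EuclideanSpace ℝ (Fin N) =>
      g y ^ 2 / (1 - ‖y‖ ^ 2) ^ 2 :=
    HasCompactSupport.intro hsupp (fun x hx => by simp [image_eq_zero_of_notMem_tsupport hx])
  have hWint : IntegrableOn (fun y : EuclideanSpace ℝ (Fin N) => g y ^ 2 / (1 - ‖y‖ ^ 2) ^ 2)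
      (ball (0:EuclideanSpace ℝ (Fin N)) 1) volume :=
    (hWcont.integrable_of_hasCompactSupport hWcs).integrableOn
  -- integrability of the right-hand side integrand
  have hG2eq : (fun y : EuclideanSpace ℝ (Fin N) => ‖gradient g y‖ ^ 2)
      = fun y => ‖fderiv ℝ g y‖ ^ 2 := funext fun y => by rw [hgradnorm y]
  have hG2cont : Continuous fun y : EuclideanSpace ℝ (Fin N) => ‖gradient g y‖ ^ 2 := by
    rw [hG2eq]
    exact ((hg.continuous_fderiv one_ne_zero).norm).pow 2
  have hG2cs : HasCompactSupport fun y : EuclideanSpace ℝ (Fin N) => ‖gradient g y‖ ^ 2 := by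
    rw [hG2eq]
    refine HasCompactSupport.intro hsupp (fun x hx => ?_)
    have : fderiv ℝ g x = 0 := by
      have hsupset := support_fderiv_subset (𝕜 := ℝ) (f := g)
      by_contra h
      exact hx (hsupset h)
    simp [this]
  have hG2int : IntegrableOn (fun y : EuclideanSpace ℝ (Fin N) => ‖gradient g y‖ ^ 2)
      (ball (0:EuclideanSpace ℝ (Fin N)) 1) volume :=
    (hG2cont.integrable_of_hasCompactSupport hG2cs).integrableOn
  -- Φ vanishes off the ball
  have hΦcompl : ∀ x : EuclideanSpace ℝ (Fin N),
      x ∉ ball (0:EuclideanSpace ℝ (Fin N)) 1 → Φ x = 0 := by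
    intro x hx
    have hxs : x ∉ tsupport g := fun h => hx (hsub h)
    have hzero : ∀ i : Fin N, fderiv ℝ (u i) x = 0 := by
      intro i
      have hts : tsupport (u i) ⊆ tsupport g := by
        apply closure_mono
        intro y hy
        by_contra hyg
        simp only [Function.mem_support, not_not] at hyg ⊢
        exact hy (by simp [hudef, hφ0 y hyg])
      have hsupset := support_fderiv_subset (𝕜 := ℝ) (f := u i)
      by_contra h
      exact hxs (hts (hsupset h))
    rw [hΦdef]
    simp [hzero]
  have step1 : (∫ y in ball (0 : EuclideanSpace ℝ (Fin N)) 1, g y ^ 2 / (1 - ‖y‖ ^ 2) ^ 2)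
      ≤ ∫ y in ball (0 : EuclideanSpace ℝ (Fin N)) 1, (Φ y + ‖gradient g y‖ ^ 2) :=
    setIntegral_mono_on hWint (hΦint.integrableOn.add hG2int) measurableSet_ball hpt
  have step2 : (∫ y in ball (0 : EuclideanSpace ℝ (Fin N)) 1, (Φ y + ‖gradient g y‖ ^ 2))
      = (∫ y in ball (0 : EuclideanSpace ℝ (Fin N)) 1, Φ y)
        + ∫ y in ball (0 : EuclideanSpace ℝ (Fin N)) 1, ‖gradient g y‖ ^ 2 :=
    integral_add hΦint.integrableOn hG2int
  have step3 : (∫ y in ball (0 : EuclideanSpace ℝ (Fin N)) 1, Φ y) = 0 := by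
    rw [setIntegral_eq_integral_of_forall_compl_eq_zero hΦcompl, hΦ0]
  rw [step2, step3, zero_add] at step1
  exact step1
end
end
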